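/- For every positive integer n, the number of n×n alternating-sign matrices with exactly k entries equal to -1, weighted by 2^k and summed over all such matrices, equals 2^{n(n-1)/2}. In symbols: Σ_{A an n×n ASM} 2^{(number of -1 entries of A)} = 2^{n(n-1)/2}. -/

import Mathlib

open Finset

/-- `A` is an alternating-sign matrix: entries in `{-1,0,1}`, every row and
column sums to `1`, and every prefix sum along a row or a column is `0` or `1`
(equivalently, the nonzero entries of each row and column alternate in sign,
beginning and ending with `1`). -/
def IsASM {n : ℕ} (A : Matrix (Fin n) (Fin n) ℤ) : Prop :=
  (∀ i j, A i j = 1 ∨ A i j = 0 ∨ A i j = -1) ∧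
  (∀ i, ∑ j, A i j = 1) ∧ (∀ j, ∑ i, A i j = 1) ∧
  (∀ i k, (∑ j ∈ univ.filter (· ≤ k), A i j) = 0 ∨ (∑ j ∈ univ.filter (· ≤ k), A i j) = 1) ∧
  (∀ j k, (∑ i ∈ univ.filter (· ≤ k), A i j) = 0 ∨ (∑ i ∈ univ.filter (· ≤ k), A i j) = 1)

/-- The number of `-1` entries of `A`. -/
def negCount {n : ℕ} (A : Matrix (Fin n) (Fin n) ℤ) : ℕ :=
  (univ.filter (fun p : Fin n × Fin n => A p.1 p.2 = -1)).card

/-- det of the matrix of power differences equals the Vandermonde product. -/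
lemma det_pow_sub (m : ℕ) (v : Fin (m+1) → ℚ) :
    (Matrix.of fun p r : Fin m =>
        v p.succ ^ ((r : ℕ)+1) - v p.castSucc ^ ((r : ℕ)+1)).det
      = ∏ i : Fin (m+1), ∏ j ∈ Ioi i, (v j - v i) := by
  classical
  set V : Matrix (Fin (m+1)) (Fin (m+1)) ℚ := Matrix.vandermonde v with hV
  set L : Matrix (Fin (m+1)) (Fin (m+1)) ℚ := Matrix.of fun i j =>
    Fin.cases (motive := fun _ => ℚ) (if j = 0 then 1 else 0)
      (fun p => (if j = p.succ then 1 else 0) - (if j = p.castSucc then 1 else 0)) i with hL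
  have hLdiag : ∀ i, L i i = 1 := by
    intro i
    induction i using Fin.cases with
    | zero => simp [hL]
    | succ p =>
      simp [hL, (Fin.castSucc_lt_succ (i := p)).ne']
  have hLtri : L.BlockTriangular ⇑OrderDual.toDual := by
    intro i j hij
    replace hij : i < j := hij
    induction i using Fin.cases with
    | zero => simp [hL, (ne_of_gt hij : j ≠ 0)]
    | succ p =>
      have h1 : j ≠ p.succ := ne_of_gt hij
      have h2 : j ≠ p.castSucc := ne_of_gt (lt_trans (Fin.castSucc_lt_succ (i := p)) hij)
      simp [hL, h1, h2]
  have hLdet : L.det = 1 := by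
    rw [Matrix.det_of_lowerTriangular L hLtri]
    simp [hLdiag]
  have hLV : ∀ (i : Fin (m+1)) (q : Fin (m+1)), (L * V) i q =
      Fin.cases (motive := fun _ => ℚ) (V 0 q) (fun p => V p.succ q - V p.castSucc q) i := by
    intro i q
    induction i using Fin.cases with
    | zero =>
      simp only [Matrix.mul_apply, hL, Matrix.of_apply, Fin.cases_zero]
      rw [Finset.sum_eq_single 0]
      · simp
      · intro b _ hb; simp [hb]
      · simp
    | succ p =>
      simp only [Matrix.mul_apply, hL, Matrix.of_apply, Fin.cases_succ, sub_mul]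
      rw [Finset.sum_sub_distrib]
      congr 1
      · rw [Finset.sum_eq_single p.succ]
        · simp
        · intro b _ hb; simp [hb]
        · simp
      · rw [Finset.sum_eq_single p.castSucc]
        · simp
        · intro b _ hb; simp [hb]
        · simp
  have hdetLV : (L * V).det = V.det := by rw [Matrix.det_mul, hLdet, one_mul]
  -- expand along column zero
  have hcol : ∀ i : Fin (m+1), (L * V) i 0 = if i = 0 then 1 else 0 := by
    intro i
    rw [hLV]
    induction i using Fin.cases with
    | zero => simp [hV, Matrix.vandermonde]
    | succ p => simp [hV, Matrix.vandermonde, Fin.succ_ne_zero]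
  have hexp : (L * V).det = ((L * V).submatrix (Fin.succAbove 0) Fin.succ).det := by
    rw [Matrix.det_succ_column_zero, Fin.sum_univ_succ]
    simp only [hcol, if_pos rfl, if_neg (Fin.succ_ne_zero _), Fin.val_zero, pow_zero, one_mul,
      mul_zero, zero_mul, Finset.sum_const_zero, add_zero, if_true]
  have hsub : ((L * V).submatrix (Fin.succAbove 0) Fin.succ) =
      (Matrix.of fun p r : Fin m => v p.succ ^ ((r : ℕ)+1) - v p.castSucc ^ ((r : ℕ)+1)) := by
    ext p r
    rw [Matrix.submatrix_apply, Fin.succAbove_zero, hLV]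
    simp [hV, Matrix.vandermonde]
  rw [← hsub, ← hexp, hdetLV, hV, Matrix.det_vandermonde]

noncomputable def Hf (q y : ℕ) : ℚ := ∑ x ∈ range y, ((x:ℚ)^q + ((x:ℚ)+1)^q)

noncomputable def cf (q r : ℕ) : ℚ :=
  2 * bernoulli (q-r) * ((q+1).choose (q-r)) / ((q:ℚ)+1) + (if r+1 = q then 1 else 0)

lemma cf_diag (q : ℕ) : cf q q = 2 / ((q:ℚ)+1) := by
  simp [cf, Nat.sub_self, Nat.succ_ne_self]

lemma Hf_repr (q y : ℕ) : Hf q y = ∑ r ∈ range (q+1), cf q r * (y:ℚ)^(r+1) := by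
  have hsplit : Hf q y = 2 * (∑ x ∈ range y, (x:ℚ)^q) + ((y:ℚ)^q - (0:ℚ)^q) := by
    unfold Hf
    rw [Finset.sum_add_distrib]
    have h2 : ∑ x ∈ range y, ((x:ℚ)+1)^q = ∑ x ∈ range (y+1), (x:ℚ)^q - (0:ℚ)^q := by
      rw [Finset.sum_range_succ' (fun x => (x:ℚ)^q) y]
      push_cast
      ring
    rw [h2, Finset.sum_range_succ]
    ring
  rw [hsplit, sum_range_pow y q]
  have hre : ∑ i ∈ range (q+1), bernoulli i * ((q+1).choose i) * (y:ℚ)^(q+1-i) / ((q:ℚ)+1)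
      = ∑ r ∈ range (q+1), bernoulli (q-r) * ((q+1).choose (q-r)) * (y:ℚ)^(r+1) / ((q:ℚ)+1) := by
    rw [← Finset.sum_range_reflect]
    apply Finset.sum_congr rfl
    intro r hr
    rw [Finset.mem_range] at hr
    have h1 : q + 1 - 1 - r = q - r := by omega
    have h2 : q + 1 - (q - r) = r + 1 := by omega
    rw [h1, h2]
  have hind : ∑ r ∈ range (q+1), (if r+1 = q then (1:ℚ) else 0) * (y:ℚ)^(r+1)
      = (y:ℚ)^q - (0:ℚ)^q := by
    rcases Nat.eq_zero_or_pos q with hq | hq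
    · subst hq; simp
    · have hq1 : q - 1 ∈ range (q+1) := by rw [Finset.mem_range]; omega
      rw [Finset.sum_eq_single (q-1)]
      · rw [if_pos (by omega)]
        have : q - 1 + 1 = q := by omega
        rw [this, one_mul, (zero_pow (by omega : q ≠ 0) : (0:ℚ)^q = 0), sub_zero]
      · intro b _ hb
        rw [if_neg (by omega), zero_mul]
      · intro h; exact absurd hq1 h
  calc 2 * (∑ i ∈ range (q+1), bernoulli i * ((q+1).choose i) * (y:ℚ)^(q+1-i) / ((q:ℚ)+1))
        + ((y:ℚ)^q - (0:ℚ)^q)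
      = ∑ r ∈ range (q+1), (2 * bernoulli (q-r) * ((q+1).choose (q-r)) / ((q:ℚ)+1)) * (y:ℚ)^(r+1)
        + ∑ r ∈ range (q+1), (if r+1 = q then (1:ℚ) else 0) * (y:ℚ)^(r+1) := by
        rw [hre, hind, Finset.mul_sum]
        congr 1
        apply Finset.sum_congr rfl
        intro r _
        ring
    _ = ∑ r ∈ range (q+1), cf q r * (y:ℚ)^(r+1) := by
        rw [← Finset.sum_add_distrib]
        apply Finset.sum_congr rfl
        intro r _
        unfold cf
        ring

lemma interval_sum (a b q : ℕ) (h : a < b) :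
    ∑ x ∈ Finset.Icc a b, (if x = a ∨ x = b then (1:ℚ) else 2) * (x:ℚ)^q
      = Hf q b - Hf q a := by
  set f : ℕ → ℚ := fun x => (x:ℚ)^q with hf
  have key : ∑ x ∈ Finset.Icc a b, (if x = a ∨ x = b then (1:ℚ) else 2) * f x
      = (∑ x ∈ Finset.Ico a b, f x) + (∑ x ∈ Finset.Ioc a b, f x) := by
    have hIco : ∑ x ∈ Finset.Ico a b, f x = (∑ x ∈ Finset.Icc a b, f x) - f b := by
      have : Finset.Icc a b = Finset.Ico a (b+1) := (Finset.Ico_add_one_right_eq_Icc a b).symm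
      rw [this, Finset.sum_Ico_succ_top (le_of_lt h)]
      ring
    have hIoc : ∑ x ∈ Finset.Ioc a b, f x = (∑ x ∈ Finset.Icc a b, f x) - f a := by
      have : Finset.Icc a b = insert a (Finset.Ioc a b) := by
        rw [Finset.Ioc_insert_left (le_of_lt h)]
      rw [this, Finset.sum_insert (by simp)]
      ring
    rw [hIco, hIoc]
    have hsub : ∑ x ∈ Finset.Icc a b, (if x = a ∨ x = b then (1:ℚ) else 2) * f x
        = ∑ x ∈ Finset.Icc a b, (2 * f x - ((if x = a then (1:ℚ) else 0) + (if x = b then (1:ℚ) else 0)) * f x) := by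
      apply Finset.sum_congr rfl
      intro x _
      by_cases hxa : x = a
      · subst hxa
        rw [if_pos (Or.inl rfl), if_pos rfl, if_neg (by omega)]
        ring
      · by_cases hxb : x = b
        · subst hxb
          rw [if_pos (Or.inr rfl), if_neg hxa, if_pos rfl]
          ring
        · rw [if_neg (by tauto), if_neg hxa, if_neg hxb]
          ring
    rw [hsub]
    rw [Finset.sum_sub_distrib]
    have h1 : ∑ x ∈ Finset.Icc a b, ((if x = a then (1:ℚ) else 0) + (if x = b then (1:ℚ) else 0)) * f x
        = f a + f b := by
      have : ∀ x, ((if x = a then (1:ℚ) else 0) + (if x = b then (1:ℚ) else 0)) * f x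
          = (if x = a then f x else 0) + (if x = b then f x else 0) := by
        intro x
        by_cases hxa : x = a
        · subst hxa
          have hxb : x ≠ b := by omega
          simp [hxb]
        · by_cases hxb : x = b
          · subst hxb; simp [hxa]
          · simp [hxa, hxb]
      simp_rw [this]
      rw [Finset.sum_add_distrib, Finset.sum_ite_eq' (Finset.Icc a b) a f,
        Finset.sum_ite_eq' (Finset.Icc a b) b f]
      rw [if_pos (by simp [le_of_lt h]), if_pos (by simp [le_of_lt h])]
    rw [h1, ← Finset.mul_sum]
    ring
  rw [key]
  have hshift : ∑ x ∈ Finset.Ioc a b, f x = ∑ x ∈ Finset.Ico a b, f (x+1) := by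
    have hmap : Finset.Ioc a b = (Finset.Ico a b).map (addRightEmbedding 1) := by
      rw [Finset.map_add_right_Ico, Finset.Ico_add_one_add_one_eq_Ioc]
    rw [hmap, Finset.sum_map]
    rfl
  rw [hshift, ← Finset.sum_add_distrib]
  have : ∀ x, f x + f (x+1) = (x:ℚ)^q + ((x:ℚ)+1)^q := by
    intro x; simp only [hf]; push_cast; ring
  simp_rw [this]
  rw [Finset.sum_Ico_eq_sub _ (le_of_lt h)]
  rfl

noncomputable def wt {m : ℕ} (t : Fin (m+1) → ℕ) (j : Fin m) (x : ℕ) : ℚ :=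
  if x = t j.castSucc ∨ x = t j.succ then 1 else 2

lemma box_sum_det (m : ℕ) (t : Fin (m+1) → ℕ) (ht : StrictMono t) :
    ∑ s ∈ Fintype.piFinset (fun j : Fin m => Finset.Icc (t j.castSucc) (t j.succ)),
        (∏ j : Fin m, wt t j (s j)) * (Matrix.of fun p q : Fin m => ((s p : ℚ)) ^ (q:ℕ)).det
      = (∏ q : Fin m, (2 / ((q:ℚ)+1))) * ∏ i : Fin (m+1), ∏ j ∈ Ioi i, ((t j : ℚ) - (t i : ℚ)) := by
  classical
  set f : MultilinearMap ℚ (fun _ : Fin m => (Fin m → ℚ)) ℚ :=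
    (Matrix.detRowAlternating : (Fin m → ℚ) [⋀^Fin m]→ₗ[ℚ] ℚ).toMultilinearMap with hfdef
  set g : (j : Fin m) → ℕ → (Fin m → ℚ) :=
    fun j x => wt t j x • (fun q : Fin m => (x:ℚ)^(q:ℕ)) with hg
  have step1 : (f fun j => ∑ x ∈ Finset.Icc (t j.castSucc) (t j.succ), g j x)
      = ∑ s ∈ Fintype.piFinset (fun j : Fin m => Finset.Icc (t j.castSucc) (t j.succ)),
          f (fun j => g j (s j)) :=
    f.map_sum_finset g _
  have step2 : ∀ s : Fin m → ℕ, f (fun j => g j (s j))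
      = (∏ j : Fin m, wt t j (s j)) * (Matrix.of fun p q : Fin m => ((s p : ℚ)) ^ (q:ℕ)).det := by
    intro s
    have := f.map_smul_univ (fun j => wt t j (s j)) (fun j => fun q : Fin m => ((s j : ℚ))^(q:ℕ))
    simp only [hg]
    rw [this]
    rfl
  -- identify the quantity as a determinant of H-differences
  have hM : (fun j => ∑ x ∈ Finset.Icc (t j.castSucc) (t j.succ), g j x)
      = fun (p : Fin m) (q : Fin m) => Hf (q:ℕ) (t p.succ) - Hf (q:ℕ) (t p.castSucc) := by
    funext p q
    have hab : t p.castSucc < t p.succ := ht (Fin.castSucc_lt_succ (i := p))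
    have : (∑ x ∈ Finset.Icc (t p.castSucc) (t p.succ), g p x) q
        = ∑ x ∈ Finset.Icc (t p.castSucc) (t p.succ),
            (if x = t p.castSucc ∨ x = t p.succ then (1:ℚ) else 2) * (x:ℚ)^(q:ℕ) := by
      rw [Finset.sum_apply]
      apply Finset.sum_congr rfl
      intro x _
      by_cases hx : x = t p.castSucc ∨ x = t p.succ <;> simp [hg, wt, hx]
    rw [this, interval_sum _ _ _ hab]
  -- the matrix factorization
  set U : Matrix (Fin m) (Fin m) ℚ :=
    Matrix.of fun r q : Fin m => if (r:ℕ) ≤ (q:ℕ) then cf (q:ℕ) (r:ℕ) else 0 with hU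
  set B : Matrix (Fin m) (Fin m) ℚ :=
    Matrix.of fun p r : Fin m =>
      ((t p.succ : ℚ)) ^ ((r:ℕ)+1) - ((t p.castSucc : ℚ)) ^ ((r:ℕ)+1) with hB
  have hfact : (Matrix.of fun (p : Fin m) (q : Fin m) =>
      Hf (q:ℕ) (t p.succ) - Hf (q:ℕ) (t p.castSucc)) = B * U := by
    ext p q
    rw [Matrix.mul_apply]
    have hfil : (range m).filter (fun r => r ≤ (q:ℕ)) = range ((q:ℕ)+1) := by
      have := q.isLt
      ext r
      simp only [Finset.mem_filter, Finset.mem_range]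
      omega
    have hrange : ∀ y : ℕ, Hf (q:ℕ) y = ∑ r : Fin m, (if (r:ℕ) ≤ (q:ℕ) then cf (q:ℕ) (r:ℕ) else 0) * (y:ℚ)^((r:ℕ)+1) := by
      intro y
      rw [Hf_repr, Fin.sum_univ_eq_sum_range (fun r => (if r ≤ (q:ℕ) then cf (q:ℕ) r else 0) * (y:ℚ)^(r+1)) m]
      simp_rw [ite_mul, zero_mul]
      rw [← Finset.sum_filter, hfil]
    simp only [Matrix.of_apply]
    rw [hrange (t p.succ), hrange (t p.castSucc), ← Finset.sum_sub_distrib]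
    apply Finset.sum_congr rfl
    intro r _
    simp only [hB, hU, Matrix.of_apply]
    ring
  have hUtri : U.BlockTriangular id := by
    intro r q hrq
    have h : (q:ℕ) < (r:ℕ) := hrq
    simp only [hU, Matrix.of_apply]
    rw [if_neg (by omega)]
  have hUdet : U.det = ∏ q : Fin m, (2 / ((q:ℚ)+1)) := by
    rw [Matrix.det_of_upperTriangular hUtri]
    apply Finset.prod_congr rfl
    intro q _
    simp [hU, cf_diag]
  have hBdet : B.det = ∏ i : Fin (m+1), ∏ j ∈ Ioi i, ((t j : ℚ) - (t i : ℚ)) := by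
    rw [hB]
    exact det_pow_sub m (fun i => (t i : ℚ))
  calc ∑ s ∈ Fintype.piFinset (fun j : Fin m => Finset.Icc (t j.castSucc) (t j.succ)),
          (∏ j : Fin m, wt t j (s j)) * (Matrix.of fun p q : Fin m => ((s p : ℚ)) ^ (q:ℕ)).det
      = ∑ s ∈ Fintype.piFinset (fun j : Fin m => Finset.Icc (t j.castSucc) (t j.succ)),
          f (fun j => g j (s j)) := by
        apply Finset.sum_congr rfl
        intro s _
        rw [step2]
    _ = (f fun j => ∑ x ∈ Finset.Icc (t j.castSucc) (t j.succ), g j x) := step1.symm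
    _ = (B * U).det := by
        rw [hM]
        rw [show (f fun p => fun q : Fin m => Hf (q:ℕ) (t p.succ) - Hf (q:ℕ) (t p.castSucc))
          = (Matrix.of fun (p : Fin m) (q : Fin m) =>
              Hf (q:ℕ) (t p.succ) - Hf (q:ℕ) (t p.castSucc)).det from rfl, hfact]
    _ = (∏ q : Fin m, (2 / ((q:ℚ)+1))) * ∏ i : Fin (m+1), ∏ j ∈ Ioi i, ((t j : ℚ) - (t i : ℚ)) := by
        rw [Matrix.det_mul, hUdet, hBdet]
        ring

section Comb
variable {n : ℕ}

/-- number of elements of `S` with value `< k`. -/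
def cnt (S : Finset (Fin n)) (k : ℕ) : ℕ := (S.filter (fun j : Fin n => (j:ℕ) < k)).card

/-- one step in a chain of subsets: cardinality grows by one and prefix counts
interlace. -/
def StepR (S T : Finset (Fin n)) : Prop :=
  T.card = S.card + 1 ∧ ∀ k : ℕ, cnt T k = cnt S k ∨ cnt T k = cnt S k + 1

lemma cnt_ge (S : Finset (Fin n)) {k : ℕ} (hk : n ≤ k) : cnt S k = S.card := by
  unfold cnt
  rw [Finset.filter_true_of_mem]
  intro x _
  have := x.isLt
  omega

instance decStepR (S T : Finset (Fin n)) : Decidable (StepR S T) :=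
  decidable_of_iff (T.card = S.card + 1 ∧ ∀ k < n+1,
      (cnt T k = cnt S k ∨ cnt T k = cnt S k + 1)) (by
    constructor
    · rintro ⟨h1, h2⟩
      refine ⟨h1, fun k => ?_⟩
      rcases Nat.lt_or_ge k (n+1) with hk | hk
      · exact h2 k hk
      · rw [cnt_ge T (by omega), cnt_ge S (by omega)]
        right; exact h1
    · rintro ⟨h1, h2⟩
      exact ⟨h1, fun k _ => h2 k⟩)

lemma cnt_le_card (S : Finset (Fin n)) (k : ℕ) : cnt S k ≤ S.card :=
  Finset.card_filter_le _ _

lemma lt_cnt_iff (S : Finset (Fin n)) {m : ℕ} (h : S.card = m) (j : Fin m) (k : ℕ) :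
    (j:ℕ) < cnt S k ↔ ((S.orderEmbOfFin h j : Fin n) : ℕ) < k := by
  classical
  constructor
  · intro hj
    by_contra hk
    push_neg at hk
    have hsub : S.filter (fun x : Fin n => (x:ℕ) < k) ⊆
        (Finset.Iio j).image (S.orderEmbOfFin h) := by
      intro x hx
      rw [Finset.mem_filter] at hx
      obtain ⟨j'', hj''⟩ : ∃ j'', S.orderEmbOfFin h j'' = x := by
        have : x ∈ Set.range ⇑(S.orderEmbOfFin h) := by
          rw [Finset.range_orderEmbOfFin]
          exact_mod_cast hx.1
        exact this
      have hlt : S.orderEmbOfFin h j'' < S.orderEmbOfFin h j := by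
        rw [Fin.lt_iff_val_lt_val, hj'']
        omega
      rw [Finset.mem_image]
      exact ⟨j'', by simpa using ((S.orderEmbOfFin h).lt_iff_lt.mp hlt), hj''⟩
    have hcard := Finset.card_le_card hsub
    rw [Finset.card_image_of_injective _ (S.orderEmbOfFin h).injective, Fin.card_Iio] at hcard
    have : cnt S k ≤ (j:ℕ) := hcard
    omega
  · intro hjk
    have hsub : (Finset.Iic j).image (S.orderEmbOfFin h) ⊆
        S.filter (fun x : Fin n => (x:ℕ) < k) := by
      intro x hx
      rw [Finset.mem_image] at hx
      obtain ⟨j', hj', rfl⟩ := hx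
      rw [Finset.mem_filter]
      refine ⟨Finset.orderEmbOfFin_mem _ _ _, ?_⟩
      have hle : S.orderEmbOfFin h j' ≤ S.orderEmbOfFin h j :=
        (S.orderEmbOfFin h).le_iff_le.mpr (Finset.mem_Iic.mp hj')
      rw [Fin.le_iff_val_le_val] at hle
      omega
    have hcard := Finset.card_le_card hsub
    rw [Finset.card_image_of_injective _ (S.orderEmbOfFin h).injective, Fin.card_Iic] at hcard
    have : (j:ℕ) + 1 ≤ cnt S k := hcard
    omega

/-- characterization of `StepR` via the order embeddings. -/
lemma charStep {m : ℕ} (S T' : Finset (Fin n)) (hS : S.card = m) (hT : T'.card = m + 1) :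
    (∀ k : ℕ, cnt T' k = cnt S k ∨ cnt T' k = cnt S k + 1) ↔
    (∀ j : Fin m, T'.orderEmbOfFin hT j.castSucc ≤ S.orderEmbOfFin hS j ∧
        S.orderEmbOfFin hS j ≤ T'.orderEmbOfFin hT j.succ) := by
  classical
  constructor
  · intro hk j
    constructor
    · rw [Fin.le_iff_val_le_val]
      by_contra hc
      push_neg at hc
      have h1 : ((j:ℕ)) < cnt S (((S.orderEmbOfFin hS j : Fin n) : ℕ)+1) := by
        rw [lt_cnt_iff S hS j]
        omega
      have h2 : ¬ ((j.castSucc:ℕ) < cnt T' (((S.orderEmbOfFin hS j : Fin n) : ℕ)+1)) := by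
        rw [lt_cnt_iff T' hT j.castSucc]
        omega
      simp only [Fin.coe_castSucc] at h2
      rcases hk (((S.orderEmbOfFin hS j : Fin n) : ℕ)+1) with h | h <;> omega
    · rw [Fin.le_iff_val_le_val]
      by_contra hc
      push_neg at hc
      have h1 : ((j.succ:ℕ)) < cnt T' (((T'.orderEmbOfFin hT j.succ : Fin n) : ℕ)+1) := by
        rw [lt_cnt_iff T' hT j.succ]
        omega
      have h2 : ¬ ((j:ℕ) < cnt S (((T'.orderEmbOfFin hT j.succ : Fin n) : ℕ)+1)) := by
        rw [lt_cnt_iff S hS j]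
        omega
      rw [Fin.val_succ] at h1
      rcases hk (((T'.orderEmbOfFin hT j.succ : Fin n) : ℕ)+1) with h | h <;> omega
  · intro hbox k
    have hle : cnt S k ≤ cnt T' k := by
      rcases Nat.eq_zero_or_pos (cnt S k) with h0 | h0
      · omega
      · have hcm : cnt S k ≤ m := by rw [← hS]; exact cnt_le_card S k
        have hjlt : cnt S k - 1 < m := by omega
        have h1 : ((⟨cnt S k - 1, hjlt⟩ : Fin m) : ℕ) < cnt S k := by
          simp only []
          omega
        rw [lt_cnt_iff S hS ⟨cnt S k - 1, hjlt⟩ k] at h1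
        have hb := (hbox ⟨cnt S k - 1, hjlt⟩).1
        rw [Fin.le_iff_val_le_val] at hb
        have h2 : ((T'.orderEmbOfFin hT (⟨cnt S k - 1, hjlt⟩ : Fin m).castSucc : Fin n) : ℕ) < k := by
          omega
        rw [← lt_cnt_iff T' hT] at h2
        simp only [Fin.coe_castSucc] at h2
        omega
    have hge : cnt T' k ≤ cnt S k + 1 := by
      rcases Nat.lt_or_ge (cnt T' k) 2 with h0 | h0
      · omega
      · have hcm : cnt T' k ≤ m + 1 := by rw [← hT]; exact cnt_le_card T' k
        have hjlt : cnt T' k - 2 < m := by omega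
        have h1 : (((⟨cnt T' k - 2, hjlt⟩ : Fin m).succ : ℕ)) < cnt T' k := by
          simp only [Fin.val_succ]
          omega
        rw [lt_cnt_iff T' hT] at h1
        have hb := (hbox ⟨cnt T' k - 2, hjlt⟩).2
        rw [Fin.le_iff_val_le_val] at hb
        have h2 : ((S.orderEmbOfFin hS (⟨cnt T' k - 2, hjlt⟩ : Fin m) : Fin n) : ℕ) < k := by
          omega
        rw [← lt_cnt_iff S hS] at h2
        have hv : ((⟨cnt T' k - 2, hjlt⟩ : Fin m) : ℕ) = cnt T' k - 2 := rfl
        omega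
    omega

end Comb

section Key
variable {n : ℕ}

/-- the Vandermonde-type product over a finite set of `Fin n`. -/
noncomputable def Dl (S : Finset (Fin n)) : ℚ :=
  ∏ p ∈ S, ∏ q ∈ S.filter (fun q => p < q), (((q:ℕ):ℚ) - ((p:ℕ):ℚ))

lemma Dl_eq {m : ℕ} (S : Finset (Fin n)) (h : S.card = m) :
    Dl S = ∏ i : Fin m, ∏ j ∈ Ioi i,
      (((S.orderEmbOfFin h j : Fin n) : ℚ) - ((S.orderEmbOfFin h i : Fin n) : ℚ)) := by
  classical
  have hIoi : ∀ i : Fin m, Ioi i = univ.filter (fun j => i < j) := by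
    intro i; ext j; simp
  have hRHS : ∏ i : Fin m, ∏ j ∈ Ioi i,
      (((S.orderEmbOfFin h j : Fin n) : ℚ) - ((S.orderEmbOfFin h i : Fin n) : ℚ))
      = ∏ z ∈ (univ ×ˢ univ : Finset (Fin m × Fin m)).filter (fun z => z.1 < z.2),
          (((S.orderEmbOfFin h z.2 : Fin n) : ℚ) - ((S.orderEmbOfFin h z.1 : Fin n) : ℚ)) := by
    rw [Finset.prod_filter, Finset.prod_product]
    apply Finset.prod_congr rfl
    intro i _
    rw [hIoi i, Finset.prod_filter]
  have hLHS : Dl S = ∏ z ∈ (S ×ˢ S).filter (fun z => z.1 < z.2),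
      (((z.2:ℕ):ℚ) - ((z.1:ℕ):ℚ)) := by
    unfold Dl
    rw [Finset.prod_filter, Finset.prod_product]
    apply Finset.prod_congr rfl
    intro p _
    rw [Finset.prod_filter]
  rw [hLHS, hRHS]
  refine (Finset.prod_bij (i := fun (z : Fin m × Fin m) _ =>
    (S.orderEmbOfFin h z.1, S.orderEmbOfFin h z.2)) ?_ ?_ ?_ ?_).symm
  · intro z hz
    rw [Finset.mem_filter] at hz ⊢
    refine ⟨Finset.mem_product.mpr ⟨Finset.orderEmbOfFin_mem _ _ _, Finset.orderEmbOfFin_mem _ _ _⟩, ?_⟩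
    exact (S.orderEmbOfFin h).lt_iff_lt.mpr hz.2
  · intro z1 h1 z2 h2 heq
    have e1 : S.orderEmbOfFin h z1.1 = S.orderEmbOfFin h z2.1 := congrArg Prod.fst heq
    have e2 : S.orderEmbOfFin h z1.2 = S.orderEmbOfFin h z2.2 := congrArg Prod.snd heq
    exact Prod.ext ((S.orderEmbOfFin h).injective e1) ((S.orderEmbOfFin h).injective e2)
  · intro z hz
    rw [Finset.mem_filter, Finset.mem_product] at hz
    obtain ⟨⟨hz1, hz2⟩, hlt⟩ := hz
    obtain ⟨i1, hi1⟩ : ∃ i, S.orderEmbOfFin h i = z.1 := by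
      have : z.1 ∈ Set.range ⇑(S.orderEmbOfFin h) := by
        rw [Finset.range_orderEmbOfFin]; exact_mod_cast hz1
      exact this
    obtain ⟨i2, hi2⟩ : ∃ i, S.orderEmbOfFin h i = z.2 := by
      have : z.2 ∈ Set.range ⇑(S.orderEmbOfFin h) := by
        rw [Finset.range_orderEmbOfFin]; exact_mod_cast hz2
      exact this
    refine ⟨(i1, i2), ?_, ?_⟩
    · rw [Finset.mem_filter]
      refine ⟨Finset.mem_product.mpr ⟨Finset.mem_univ _, Finset.mem_univ _⟩, ?_⟩
      apply (S.orderEmbOfFin h).lt_iff_lt.mp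
      rw [hi1, hi2]; exact hlt
    · show (S.orderEmbOfFin h i1, S.orderEmbOfFin h i2) = z
      exact Prod.ext hi1 hi2
  · intro z hz
    rfl

/-- the set of values of a tuple, as a subset of `Fin n`. -/
def unTup {m : ℕ} (s : Fin m → ℕ) : Finset (Fin n) :=
  univ.filter (fun x => ∃ j, (x:ℕ) = s j)

lemma unTup_eq_image {m : ℕ} (s : Fin m → ℕ) (hb : ∀ j, s j < n) :
    (unTup s : Finset (Fin n)) = univ.image (fun j => (⟨s j, hb j⟩ : Fin n)) := by
  ext x
  simp only [unTup, Finset.mem_filter, Finset.mem_univ, true_and, Finset.mem_image]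
  constructor
  · rintro ⟨j, hj⟩
    exact ⟨j, by ext; simp [hj]⟩
  · rintro ⟨j, rfl⟩
    exact ⟨j, rfl⟩

lemma unTup_card {m : ℕ} (s : Fin m → ℕ) (hsm : StrictMono s) (hb : ∀ j, s j < n) :
    (unTup (n := n) s).card = m := by
  rw [unTup_eq_image s hb]
  rw [Finset.card_image_of_injective]
  · simp
  · intro a b hab
    apply hsm.injective
    have : s a = s b := congrArg Fin.val hab
    exact this

lemma unTup_emb {m : ℕ} (s : Fin m → ℕ) (hsm : StrictMono s) (hb : ∀ j, s j < n)
    (hc : (unTup (n := n) s).card = m) :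
    ∀ j, (unTup (n := n) s).orderEmbOfFin hc j = ⟨s j, hb j⟩ := by
  have := Finset.orderEmbOfFin_unique hc (f := fun j => (⟨s j, hb j⟩ : Fin n))
    (fun j => by
      rw [unTup_eq_image s hb]
      exact Finset.mem_image_of_mem _ (Finset.mem_univ j))
    (fun a b hab => by
      rw [Fin.lt_iff_val_lt_val]
      exact hsm hab)
  intro j
  rw [← this]

end Key

section KeyL
variable {n : ℕ}

lemma mem_iff_exists_emb {m : ℕ} (S : Finset (Fin n)) (h : S.card = m) (x : Fin n) :
    x ∈ S ↔ ∃ j, S.orderEmbOfFin h j = x := by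
  constructor
  · intro hx
    have : x ∈ Set.range ⇑(S.orderEmbOfFin h) := by
      rw [Finset.range_orderEmbOfFin]; exact_mod_cast hx
    exact this
  · rintro ⟨j, rfl⟩
    exact Finset.orderEmbOfFin_mem _ _ _

lemma keyLemma {m : ℕ} (T' : Finset (Fin n)) (hT : T'.card = m + 1) :
    ∑ S ∈ (univ : Finset (Finset (Fin n))),
        (if StepR S T' then (2:ℚ)^((S \ T').card) * Dl S else 0)
      = (∏ q : Fin m, (2 / (((q:ℕ):ℚ)+1))) * Dl T' := by
  classical
  set t : Fin (m+1) → ℕ := fun i => ((T'.orderEmbOfFin hT i : Fin n) : ℕ) with htd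
  have ht : StrictMono t := fun a b hab =>
    Fin.lt_iff_val_lt_val.mp ((T'.orderEmbOfFin hT).lt_iff_lt.mpr hab)
  rw [← Finset.sum_filter]
  have hbij :
      ∑ S ∈ univ.filter (fun S => StepR S T'), (2:ℚ)^((S \ T').card) * Dl S
        = ∑ s ∈ (Fintype.piFinset (fun j : Fin m => Finset.Icc (t j.castSucc) (t j.succ))).filter
              (fun s => StrictMono s),
            (∏ j : Fin m, wt t j (s j)) * (Matrix.of fun p q : Fin m => ((s p : ℚ)) ^ (q:ℕ)).det := by
    apply Finset.sum_bij (i := fun S hS => fun j : Fin m =>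
        ((S.orderEmbOfFin (show S.card = m by
            have h1 := (Finset.mem_filter.mp hS).2.1
            omega) j : Fin n) : ℕ))
    · intro S hS
      have hstep := (Finset.mem_filter.mp hS).2
      have hc : S.card = m := by have := hstep.1; omega
      rw [Finset.mem_filter]
      constructor
      · rw [Fintype.mem_piFinset]
        intro j
        rw [Finset.mem_Icc]
        have hbox := (charStep S T' hc hT).mp hstep.2 j
        exact ⟨Fin.le_iff_val_le_val.mp hbox.1, Fin.le_iff_val_le_val.mp hbox.2⟩
      · intro a b hab
        exact Fin.lt_iff_val_lt_val.mp ((S.orderEmbOfFin _).lt_iff_lt.mpr hab)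
    · intro S1 h1 S2 h2 heq
      have hc1 : S1.card = m := by have := (Finset.mem_filter.mp h1).2.1; omega
      have hc2 : S2.card = m := by have := (Finset.mem_filter.mp h2).2.1; omega
      ext x
      rw [mem_iff_exists_emb S1 hc1 x, mem_iff_exists_emb S2 hc2 x]
      constructor
      · rintro ⟨j, rfl⟩
        exact ⟨j, Fin.val_injective (congrFun heq j).symm⟩
      · rintro ⟨j, rfl⟩
        exact ⟨j, Fin.val_injective (congrFun heq j)⟩
    · intro s hs
      rw [Finset.mem_filter, Fintype.mem_piFinset] at hs
      obtain ⟨hsbox, hsm⟩ := hs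
      have hb : ∀ j, s j < n := by
        intro j
        have := (Finset.mem_Icc.mp (hsbox j)).2
        have h2 : t j.succ < n := (T'.orderEmbOfFin hT j.succ).isLt
        omega
      have hc : (unTup (n := n) s).card = m := unTup_card s hsm hb
      refine ⟨unTup s, ?_, ?_⟩
      · rw [Finset.mem_filter]
        refine ⟨Finset.mem_univ _, ?_, ?_⟩
        · omega
        · rw [charStep (unTup s) T' hc hT]
          intro j
          rw [unTup_emb s hsm hb hc j]
          constructor
          · rw [Fin.le_iff_val_le_val]
            exact (Finset.mem_Icc.mp (hsbox j)).1
          · rw [Fin.le_iff_val_le_val]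
            exact (Finset.mem_Icc.mp (hsbox j)).2
      · funext j
        rw [show ((unTup (n := n) s).orderEmbOfFin _ j : ℕ) = s j from by
          rw [unTup_emb s hsm hb hc j]]
    · intro S hS
      have hstep := (Finset.mem_filter.mp hS).2
      have hc : S.card = m := by have := hstep.1; omega
      have hbox := (charStep S T' hc hT).mp hstep.2
      -- value equality
      have hmem_iff : ∀ j : Fin m,
          (S.orderEmbOfFin hc j ∈ T') ↔
            ((S.orderEmbOfFin hc j : ℕ) = t j.castSucc ∨ (S.orderEmbOfFin hc j : ℕ) = t j.succ) := by
        intro j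
        constructor
        · intro hmem
          obtain ⟨i, hi⟩ := (mem_iff_exists_emb T' hT _).mp hmem
          have hge : j.castSucc ≤ i := by
            apply (T'.orderEmbOfFin hT).le_iff_le.mp
            rw [hi]
            exact (hbox j).1
          have hle : i ≤ j.succ := by
            apply (T'.orderEmbOfFin hT).le_iff_le.mp
            rw [hi]
            exact (hbox j).2
          have : i = j.castSucc ∨ i = j.succ := by
            rw [Fin.le_iff_val_le_val] at hge hle
            rcases Nat.lt_or_ge (i : ℕ) ((j:ℕ)+1) with h | h
            · left; ext; simp only [Fin.coe_castSucc] at hge ⊢; omega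
            · right; ext; simp only [Fin.val_succ] at hle ⊢; omega
          rcases this with rfl | rfl
          · left; rw [← hi]
          · right; rw [← hi]
        · intro hval
          rcases hval with h | h
          · have : S.orderEmbOfFin hc j = T'.orderEmbOfFin hT j.castSucc :=
              Fin.val_injective h
            rw [this]
            exact Finset.orderEmbOfFin_mem _ _ _
          · have : S.orderEmbOfFin hc j = T'.orderEmbOfFin hT j.succ :=
              Fin.val_injective h
            rw [this]
            exact Finset.orderEmbOfFin_mem _ _ _
      have hwprod : (∏ j : Fin m, wt t j ((S.orderEmbOfFin hc j : ℕ)))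
          = (2:ℚ)^((S \ T').card) := by
        have h1 : ∀ j : Fin m, wt t j ((S.orderEmbOfFin hc j : ℕ))
            = if S.orderEmbOfFin hc j ∈ T' then (1:ℚ) else 2 := by
          intro j
          unfold wt
          by_cases hmem : S.orderEmbOfFin hc j ∈ T'
          · rw [if_pos ((hmem_iff j).mp hmem), if_pos hmem]
          · rw [if_neg (fun hcon => hmem ((hmem_iff j).mpr hcon)), if_neg hmem]
        simp_rw [h1]
        rw [Finset.prod_ite (fun _ => (1:ℚ)) (fun _ => (2:ℚ))]
        rw [Finset.prod_const, Finset.prod_const, one_pow, one_mul]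
        congr 1
        have himg : S \ T' = (univ.filter (fun j : Fin m => ¬ S.orderEmbOfFin hc j ∈ T')).image
            (S.orderEmbOfFin hc) := by
          ext x
          rw [Finset.mem_sdiff, Finset.mem_image]
          constructor
          · rintro ⟨hxS, hxT⟩
            obtain ⟨j, rfl⟩ := (mem_iff_exists_emb S hc x).mp hxS
            exact ⟨j, Finset.mem_filter.mpr ⟨Finset.mem_univ _, hxT⟩, rfl⟩
          · rintro ⟨j, hj, rfl⟩
            exact ⟨Finset.orderEmbOfFin_mem _ _ _, (Finset.mem_filter.mp hj).2⟩
        rw [himg, Finset.card_image_of_injective _ (S.orderEmbOfFin hc).injective]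
      have hDl : Dl S = (Matrix.of fun p q : Fin m =>
          (((S.orderEmbOfFin hc p : Fin n) : ℚ)) ^ (q:ℕ)).det := by
        rw [Dl_eq S hc]
        rw [show (Matrix.of fun p q : Fin m => (((S.orderEmbOfFin hc p : Fin n) : ℚ)) ^ (q:ℕ))
          = Matrix.vandermonde (fun p => ((S.orderEmbOfFin hc p : Fin n) : ℚ)) from rfl]
        rw [Matrix.det_vandermonde]
      rw [hDl, ← hwprod]
  rw [hbij]
  have hext : ∑ s ∈ (Fintype.piFinset (fun j : Fin m => Finset.Icc (t j.castSucc) (t j.succ))).filter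
          (fun s => StrictMono s),
        (∏ j : Fin m, wt t j (s j)) * (Matrix.of fun p q : Fin m => ((s p : ℚ)) ^ (q:ℕ)).det
      = ∑ s ∈ Fintype.piFinset (fun j : Fin m => Finset.Icc (t j.castSucc) (t j.succ)),
        (∏ j : Fin m, wt t j (s j)) * (Matrix.of fun p q : Fin m => ((s p : ℚ)) ^ (q:ℕ)).det := by
    rw [Finset.sum_filter]
    apply Finset.sum_congr rfl
    intro s hs
    by_cases hsm : StrictMono s
    · rw [if_pos hsm]
    · rw [if_neg hsm]
      rw [Fintype.mem_piFinset] at hs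
      have hmono : Monotone s := by
        intro a b hab
        rcases eq_or_lt_of_le hab with rfl | hlt
        · exact le_refl _
        · have h1 : s a ≤ t a.succ := (Finset.mem_Icc.mp (hs a)).2
          have h2 : t b.castSucc ≤ s b := (Finset.mem_Icc.mp (hs b)).1
          have h3 : a.succ ≤ b.castSucc := by
            rw [Fin.le_iff_val_le_val]
            simp only [Fin.val_succ, Fin.coe_castSucc]
            exact hlt
          have h4 : t a.succ ≤ t b.castSucc := ht.monotone h3
          omega
      have hninj : ¬ Function.Injective s := by
        intro hinj
        exact hsm ((hmono.strictMono_iff_injective).mpr hinj)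
      rw [Function.not_injective_iff] at hninj
      obtain ⟨a, b, hab, hne⟩ := hninj
      have hdet : (Matrix.of fun p q : Fin m => ((s p : ℚ)) ^ (q:ℕ)).det = 0 := by
        apply Matrix.det_zero_of_row_eq hne
        funext q
        simp [hab]
      rw [hdet, mul_zero]
  rw [hext, box_sum_det m t ht, Dl_eq T' hT]

noncomputable def G : ℕ → Finset (Fin n) → ℚ
  | 0, T => if T = ∅ then 1 else 0
  | (m+1), T' => ∑ S ∈ (univ : Finset (Finset (Fin n))),
      (if StepR S T' then (2:ℚ)^((S \ T').card) * G m S else 0)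

lemma G_eq : ∀ (m : ℕ) (T : Finset (Fin n)), T.card = m →
    G m T = (∏ j ∈ range m, ∏ q ∈ range j, (2 / ((q:ℚ)+1))) * Dl T := by
  intro m
  induction m with
  | zero =>
    intro T h
    rw [Finset.card_eq_zero] at h
    subst h
    simp [G, Dl]
  | succ m ih =>
    intro T' h
    show (∑ S ∈ (univ : Finset (Finset (Fin n))),
        if StepR S T' then (2:ℚ)^((S \ T').card) * G m S else 0) = _
    have h1 : ∀ S : Finset (Fin n),
        (if StepR S T' then (2:ℚ)^((S \ T').card) * G m S else 0)
          = (∏ j ∈ range m, ∏ q ∈ range j, (2 / ((q:ℚ)+1)))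
            * (if StepR S T' then (2:ℚ)^((S \ T').card) * Dl S else 0) := by
      intro S
      by_cases hs : StepR S T'
      · rw [if_pos hs, if_pos hs, ih S (by have := hs.1; omega)]
        ring
      · rw [if_neg hs, if_neg hs, mul_zero]
    calc (∑ S ∈ (univ : Finset (Finset (Fin n))),
        if StepR S T' then (2:ℚ)^((S \ T').card) * G m S else 0)
        = (∏ j ∈ range m, ∏ q ∈ range j, (2 / ((q:ℚ)+1)))
            * ∑ S ∈ (univ : Finset (Finset (Fin n))),
              (if StepR S T' then (2:ℚ)^((S \ T').card) * Dl S else 0) := by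
          rw [Finset.mul_sum]
          exact Finset.sum_congr rfl (fun S _ => h1 S)
      _ = (∏ j ∈ range m, ∏ q ∈ range j, (2 / ((q:ℚ)+1)))
            * ((∏ q : Fin m, (2 / (((q:ℕ):ℚ)+1))) * Dl T') := by
          rw [keyLemma T' h]
      _ = (∏ j ∈ range (m+1), ∏ q ∈ range j, (2 / ((q:ℚ)+1))) * Dl T' := by
          rw [Finset.prod_range_succ,
            Fin.prod_univ_eq_prod_range (fun q => (2 / (((q:ℕ):ℚ)+1))) m]
          ring

lemma cast_factorial_prod (M : ℕ) : ∏ q ∈ range M, ((q:ℚ)+1) = (M.factorial : ℚ) := by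
  rw [← Finset.prod_range_add_one_eq_factorial M]
  push_cast
  rfl

lemma final_count : (∏ j ∈ range n, ∏ q ∈ range j, (2 / ((q:ℚ)+1)))
    * Dl (univ : Finset (Fin n)) = 2 ^ (n * (n-1) / 2) := by
  classical
  have hcard : (univ : Finset (Fin n)).card = n := by simp
  have hemb : ∀ j : Fin n, (univ : Finset (Fin n)).orderEmbOfFin hcard j = j := by
    have h := Finset.orderEmbOfFin_unique hcard (f := fun j : Fin n => j)
      (fun j => Finset.mem_univ j) strictMono_id
    intro j
    exact (congrFun h j).symm
  rw [Dl_eq univ hcard]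
  have hinner : ∀ i : Fin n, (∏ j ∈ Ioi i,
      (((univ.orderEmbOfFin hcard j : Fin n):ℚ) - ((univ.orderEmbOfFin hcard i : Fin n):ℚ)))
      = ((n - 1 - (i:ℕ)).factorial : ℚ) := by
    intro i
    have hn1 : 0 < n := i.pos
    have hbij : (∏ j ∈ Ioi i, (((univ.orderEmbOfFin hcard j : Fin n):ℚ)
          - ((univ.orderEmbOfFin hcard i : Fin n):ℚ)))
        = ∏ k ∈ Finset.Ico ((i:ℕ)+1) n, ((k:ℚ) - ((i:ℕ):ℚ)) := by
      simp_rw [hemb]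
      refine Finset.prod_nbij' (fun a => (a:ℕ))
        (fun k => (⟨min k (n-1), by omega⟩ : Fin n)) ?_ ?_ ?_ ?_ ?_
      · intro a ha
        rw [Finset.mem_Ioi] at ha
        rw [Finset.mem_Ico]
        exact ⟨ha, a.isLt⟩
      · intro k hk
        rw [Finset.mem_Ico] at hk
        rw [Finset.mem_Ioi, Fin.lt_iff_val_lt_val]
        simp only []
        have := i.isLt
        omega
      · intro a ha
        rw [Finset.mem_Ioi] at ha
        ext
        simp only []
        have := a.isLt
        omega
      · intro k hk
        rw [Finset.mem_Ico] at hk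
        simp only []
        omega
      · intro a _
        rfl
    rw [hbij, Finset.prod_Ico_eq_prod_range]
    have hcast : ∀ k : ℕ, ((((i:ℕ)+1+k : ℕ)):ℚ) - ((i:ℕ):ℚ) = (k:ℚ)+1 := by
      intro k; push_cast; ring
    simp_rw [hcast]
    rw [cast_factorial_prod]
    congr 2
    omega
  simp_rw [hinner]
  rw [Fin.prod_univ_eq_prod_range (fun i => ((n - 1 - i).factorial : ℚ)) n]
  rw [Finset.prod_range_reflect (fun i => ((i).factorial : ℚ)) n]
  rw [← Finset.prod_mul_distrib]
  have hKj : ∀ j : ℕ, (∏ q ∈ range j, (2 / ((q:ℚ)+1))) * (j.factorial : ℚ) = 2^j := by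
    intro j
    rw [Finset.prod_div_distrib, Finset.prod_const, Finset.card_range, cast_factorial_prod]
    have : (j.factorial : ℚ) ≠ 0 := by exact_mod_cast j.factorial_ne_zero
    field_simp
  calc ∏ j ∈ range n, (∏ q ∈ range j, (2 / ((q:ℚ)+1))) * ((j.factorial : ℚ))
      = ∏ j ∈ range n, (2:ℚ)^j := Finset.prod_congr rfl (fun j _ => hKj j)
    _ = (2:ℚ) ^ (∑ j ∈ range n, j) := Finset.prod_pow_eq_pow_sum _ _ _
    _ = 2 ^ (n * (n-1) / 2) := by rw [Finset.sum_range_id]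
noncomputable def wfun {m : ℕ} (T : Fin (m+1) → Finset (Fin n)) : ℚ :=
  ∏ i : Fin m, 2 ^ ((T i.castSucc \ T i.succ).card)

def PCh (m : ℕ) (T' : Finset (Fin n)) : Finset (Fin (m+1) → Finset (Fin n)) :=
  univ.filter (fun T => T 0 = ∅ ∧ T (Fin.last m) = T'
    ∧ ∀ i : Fin m, StepR (T i.castSucc) (T i.succ))

lemma chainSum : ∀ (m : ℕ) (T' : Finset (Fin n)),
    ∑ T ∈ PCh m T', wfun T = G m T' := by
  intro m
  induction m with
  | zero =>
    intro T'
    by_cases hT : T' = ∅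
    · subst hT
      have hPCh : PCh 0 (∅ : Finset (Fin n)) = {fun _ => ∅} := by
        ext T
        simp only [PCh, Finset.mem_filter, Finset.mem_univ, true_and, Finset.mem_singleton]
        constructor
        · rintro ⟨h0, _, _⟩
          funext i
          rw [Fin.eq_zero i]
          exact h0
        · rintro rfl
          exact ⟨rfl, rfl, fun i => i.elim0⟩
      rw [hPCh, Finset.sum_singleton]
      show wfun _ = G 0 (∅ : Finset (Fin n))
      simp [wfun, G]
    · have hPCh : PCh 0 T' = ∅ := by
        ext T
        simp only [PCh, Finset.mem_filter, Finset.mem_univ, true_and,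
          Finset.notMem_empty, iff_false]
        rintro ⟨h0, hl, _⟩
        exact hT (by rw [← hl, show (Fin.last 0) = 0 from rfl, h0])
      rw [hPCh, Finset.sum_empty]
      show (0:ℚ) = G 0 T'
      simp [G, hT]
  | succ m ih =>
    intro T'
    show _ = ∑ S ∈ (univ : Finset (Finset (Fin n))),
        (if StepR S T' then (2:ℚ)^((S \ T').card) * G m S else 0)
    rw [← Finset.sum_filter]
    have h1 : ∀ S ∈ univ.filter (fun S => StepR S T'),
        (2:ℚ)^((S \ T').card) * G m S
        = ∑ c ∈ PCh m S, (2:ℚ)^((S \ T').card) * wfun c := by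
      intro S _
      rw [← ih S, Finset.mul_sum]
    rw [Finset.sum_congr rfl h1]
    rw [← Finset.sum_sigma (univ.filter (fun S => StepR S T')) (fun S => PCh m S)
      (fun x => (2:ℚ)^((x.1 \ T').card) * wfun x.2)]
    -- bijection with chains of length m+1
    apply Finset.sum_bij (i := fun (T : Fin (m+2) → Finset (Fin n)) _ =>
      (⟨T (Fin.last m).castSucc, T ∘ Fin.castSucc⟩ :
        Σ _ : Finset (Fin n), (Fin (m+1) → Finset (Fin n))))
    · intro T hT
      rw [PCh, Finset.mem_filter] at hT
      obtain ⟨_, h0, hl, hstep⟩ := hT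
      rw [Finset.mem_sigma]
      have hlast := hstep (Fin.last m)
      rw [Fin.succ_last, hl] at hlast
      refine ⟨Finset.mem_filter.mpr ⟨Finset.mem_univ _, hlast⟩, ?_⟩
      rw [PCh, Finset.mem_filter]
      refine ⟨Finset.mem_univ _, ?_, rfl, ?_⟩
      · show T (0 : Fin (m+1)).castSucc = ∅
        rw [Fin.castSucc_zero]
        exact h0
      · intro i
        show StepR (T (i.castSucc : Fin (m+1)).castSucc) (T (i.succ : Fin (m+1)).castSucc)
        have := hstep i.castSucc
        rw [Fin.succ_castSucc] at this
        exact this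
    · intro T1 h1' T2 h2' heq
      rw [PCh, Finset.mem_filter] at h1' h2'
      have hfst : T1 (Fin.last m).castSucc = T2 (Fin.last m).castSucc :=
        congrArg Sigma.fst heq
      have hsnd : T1 ∘ Fin.castSucc = T2 ∘ Fin.castSucc := by
        have := Sigma.mk.inj_iff.mp heq
        exact eq_of_heq this.2
      funext u
      rcases Fin.eq_castSucc_or_eq_last u with ⟨v, rfl⟩ | rfl
      · exact congrFun hsnd v
      · rw [h1'.2.2.1, h2'.2.2.1]
    · rintro ⟨S, c⟩ hSc
      rw [Finset.mem_sigma] at hSc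
      obtain ⟨hSf, hc⟩ := hSc
      have hSstep : StepR S T' := by
        have := (Finset.mem_filter.mp hSf).2
        exact this
      rw [PCh, Finset.mem_filter] at hc
      obtain ⟨_, hc0, hcl, hcstep⟩ := hc
      dsimp only at hc0 hcl hcstep
      refine ⟨Fin.snoc c T', ?_, ?_⟩
      · rw [PCh, Finset.mem_filter]
        refine ⟨Finset.mem_univ _, ?_, ?_, ?_⟩
        · show (Fin.snoc c T' : Fin (m+2) → Finset (Fin n)) 0 = ∅
          rw [show (0 : Fin (m+2)) = (0 : Fin (m+1)).castSucc from (Fin.castSucc_zero).symm,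
            Fin.snoc_castSucc]
          exact hc0
        · rw [Fin.snoc_last]
        · intro i
          rcases Fin.eq_castSucc_or_eq_last i with ⟨v, rfl⟩ | rfl
          · rw [Fin.succ_castSucc, Fin.snoc_castSucc, Fin.snoc_castSucc]
            exact hcstep v
          · rw [Fin.succ_last, Fin.snoc_last, Fin.snoc_castSucc, hcl]
            exact hSstep
      · show (⟨(Fin.snoc c T' : Fin (m+2) → Finset (Fin n)) (Fin.last m).castSucc,
          (Fin.snoc c T') ∘ Fin.castSucc⟩ :
            Σ _ : Finset (Fin n), (Fin (m+1) → Finset (Fin n))) = ⟨S, c⟩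
        have h2 : (Fin.snoc c T' : Fin (m+2) → Finset (Fin n)) ∘ Fin.castSucc = c := by
          funext v
          exact Fin.snoc_castSucc _ _ _
        rw [Fin.snoc_castSucc, hcl, h2]
    · intro T hT
      rw [PCh, Finset.mem_filter] at hT
      obtain ⟨_, h0, hl, hstep⟩ := hT
      show wfun T = (2:ℚ)^((T (Fin.last m).castSucc \ T').card) * wfun (T ∘ Fin.castSucc)
      unfold wfun
      rw [Fin.prod_univ_castSucc
        (fun i : Fin (m+1) => (2:ℚ) ^ ((T i.castSucc \ T i.succ).card))]
      rw [Fin.succ_last, hl]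
      rw [mul_comm]
      congr 1
def Mmat (T : Fin (n+1) → Finset (Fin n)) : Matrix (Fin n) (Fin n) ℤ :=
  fun i j => (if j ∈ T i.succ then 1 else 0) - (if j ∈ T i.castSucc then 1 else 0)

def colsum (A : Matrix (Fin n) (Fin n) ℤ) (u : ℕ) (j : Fin n) : ℤ :=
  ∑ i ∈ univ.filter (fun i : Fin n => (i:ℕ) < u), A i j

def CT (A : Matrix (Fin n) (Fin n) ℤ) : Fin (n+1) → Finset (Fin n) :=
  fun u => univ.filter (fun j => colsum A (u:ℕ) j = 1)

lemma filter_le_eq (b : Fin n) :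
    univ.filter (fun i : Fin n => i ≤ b) = univ.filter (fun i : Fin n => (i:ℕ) < (b:ℕ)+1) := by
  ext i
  simp only [Finset.mem_filter, Finset.mem_univ, true_and, Fin.le_def]
  omega

lemma colsum_zero (A : Matrix (Fin n) (Fin n) ℤ) (j : Fin n) : colsum A 0 j = 0 := by
  unfold colsum
  rw [Finset.filter_false_of_mem (fun i _ => by omega), Finset.sum_empty]

lemma colsum_succ (A : Matrix (Fin n) (Fin n) ℤ) {u : ℕ} (hu : u < n) (j : Fin n) :
    colsum A (u+1) j = colsum A u j + A ⟨u, hu⟩ j := by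
  unfold colsum
  have h : univ.filter (fun i : Fin n => (i:ℕ) < u+1)
      = insert (⟨u, hu⟩ : Fin n) (univ.filter (fun i : Fin n => (i:ℕ) < u)) := by
    ext x
    simp only [Finset.mem_filter, Finset.mem_univ, true_and, Finset.mem_insert, Fin.ext_iff]
    omega
  rw [h, Finset.sum_insert (by simp)]
  ring

lemma colsum_ge (A : Matrix (Fin n) (Fin n) ℤ) {u : ℕ} (hu : n ≤ u) (j : Fin n) :
    colsum A u j = ∑ i, A i j := by
  unfold colsum
  rw [Finset.filter_true_of_mem (fun i _ => by have := i.isLt; omega)]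

lemma card_filter_lt {u : ℕ} (hu : u ≤ n) :
    (univ.filter (fun i : Fin n => (i:ℕ) < u)).card = u := by
  rcases Nat.lt_or_ge u n with h | h
  · have : univ.filter (fun i : Fin n => (i:ℕ) < u) = Finset.Iio (⟨u, h⟩ : Fin n) := by
      ext x
      simp only [Finset.mem_filter, Finset.mem_univ, true_and, Finset.mem_Iio,
        Fin.lt_iff_val_lt_val]
    rw [this, Fin.card_Iio]
  · have hun : u = n := by omega
    subst hun
    rw [Finset.filter_true_of_mem (fun i _ => i.isLt)]
    simp

lemma cnt_as_sum (S : Finset (Fin n)) (k : ℕ) :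
    ((cnt S k : ℕ) : ℤ) = ∑ j ∈ univ.filter (fun j : Fin n => (j:ℕ) < k),
      (if j ∈ S then (1:ℤ) else 0) := by
  rw [Finset.sum_boole]
  unfold cnt
  have h : S.filter (fun j : Fin n => (j:ℕ) < k)
      = (univ.filter (fun j : Fin n => (j:ℕ) < k)).filter (fun j => j ∈ S) := by
    ext j
    simp only [Finset.mem_filter, Finset.mem_univ, true_and]
    tauto
  rw [h]

lemma card_as_sum (S : Finset (Fin n)) :
    ((S.card : ℕ) : ℤ) = ∑ j : Fin n, (if j ∈ S then (1:ℤ) else 0) := by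
  rw [Finset.sum_boole]
  congr 1
  rw [Finset.filter_mem_eq_inter, Finset.univ_inter]

/-- telescoping for column partial sums of `Mmat`. -/
lemma colsum_Mmat (T : Fin (n+1) → Finset (Fin n)) (u : Fin (n+1)) (j : Fin n) :
    colsum (Mmat T) (u:ℕ) j
      = (if j ∈ T u then (1:ℤ) else 0) - (if j ∈ T 0 then (1:ℤ) else 0) := by
  classical
  rcases Nat.eq_zero_or_pos n with h0 | h0
  · exact absurd h0.symm (by subst h0; exact j.elim0)
  set F : ℕ → ℤ := fun k => if h : k < n+1 then (if j ∈ T ⟨k, h⟩ then (1:ℤ) else 0) else 0 with hF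
  have hstep : colsum (Mmat T) (u:ℕ) j = ∑ k ∈ range (u:ℕ), (F (k+1) - F k) := by
    unfold colsum
    apply Finset.sum_nbij' (fun i : Fin n => (i:ℕ))
      (fun k => if h : k < n then (⟨k, h⟩ : Fin n) else ⟨0, h0⟩)
    · intro i hi
      rw [Finset.mem_filter] at hi
      rw [Finset.mem_range]
      exact hi.2
    · intro k hk
      rw [Finset.mem_range] at hk
      have hkn : k < n := by have := u.isLt; omega
      rw [dif_pos hkn, Finset.mem_filter]
      exact ⟨Finset.mem_univ _, hk⟩
    · intro i hi
      rw [dif_pos i.isLt]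
    · intro k hk
      rw [Finset.mem_range] at hk
      have hkn : k < n := by have := u.isLt; omega
      rw [dif_pos hkn]
    · intro i hi
      rw [Finset.mem_filter] at hi
      show Mmat T i j = F ((i:ℕ)+1) - F (i:ℕ)
      unfold Mmat
      simp only [hF]
      have h1 : (i:ℕ)+1 < n+1 := by omega
      have h2 : (i:ℕ) < n+1 := by omega
      rw [dif_pos h1, dif_pos h2]
      rfl
  rw [hstep, Finset.sum_range_sub F (u:ℕ)]
  simp only [hF]
  rw [dif_pos u.isLt, dif_pos (by omega : 0 < n+1)]
  rfl
lemma mem_CT (A : Matrix (Fin n) (Fin n) ℤ) (u : Fin (n+1)) (j : Fin n) :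
    j ∈ CT A u ↔ colsum A (u:ℕ) j = 1 := by
  unfold CT
  simp

lemma isASM_Mmat (T : Fin (n+1) → Finset (Fin n)) (hT : T ∈ PCh n (univ : Finset (Fin n))) :
    IsASM (Mmat T) := by
  classical
  rw [PCh, Finset.mem_filter] at hT
  obtain ⟨-, h0, hl, hstep⟩ := hT
  refine ⟨?_, ?_, ?_, ?_, ?_⟩
  · intro i j
    unfold Mmat
    by_cases h1 : j ∈ T i.succ <;> by_cases h2 : j ∈ T i.castSucc <;> simp [h1, h2]
  · intro i
    unfold Mmat
    rw [Finset.sum_sub_distrib, ← card_as_sum, ← card_as_sum]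
    have := (hstep i).1
    omega
  · intro j
    have hcol := colsum_Mmat T (Fin.last n) j
    rw [Fin.val_last, colsum_ge (Mmat T) (le_refl n) j, h0, hl] at hcol
    simpa using hcol
  · intro i k
    unfold Mmat
    rw [filter_le_eq k, Finset.sum_sub_distrib, ← cnt_as_sum, ← cnt_as_sum]
    rcases (hstep i).2 ((k:ℕ)+1) with h | h <;> omega
  · intro j k
    rw [filter_le_eq k]
    have hcol := colsum_Mmat T k.succ j
    rw [Fin.val_succ, h0] at hcol
    unfold colsum at hcol
    rw [hcol]
    by_cases hj : j ∈ T k.succ <;> simp [hj]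

lemma CT_Mmat (T : Fin (n+1) → Finset (Fin n)) (hT : T ∈ PCh n (univ : Finset (Fin n))) :
    CT (Mmat T) = T := by
  classical
  rw [PCh, Finset.mem_filter] at hT
  obtain ⟨-, h0, -, -⟩ := hT
  funext u
  ext j
  rw [mem_CT, colsum_Mmat T u j, h0]
  by_cases hj : j ∈ T u <;> simp [hj]

lemma weight_Mmat (T : Fin (n+1) → Finset (Fin n)) :
    ((2:ℚ)) ^ (negCount (Mmat T)) = wfun T := by
  classical
  have hneg : negCount (Mmat T) = ∑ i : Fin n, (T i.castSucc \ T i.succ).card := by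
    unfold negCount
    rw [Finset.card_filter]
    rw [Fintype.sum_prod_type]
    apply Finset.sum_congr rfl
    intro i _
    have hfil : univ.filter (fun j => Mmat T i j = -1) = T i.castSucc \ T i.succ := by
      ext j
      simp only [Finset.mem_filter, Finset.mem_univ, true_and, Finset.mem_sdiff]
      unfold Mmat
      by_cases h1 : j ∈ T i.succ <;> by_cases h2 : j ∈ T i.castSucc <;> simp [h1, h2]
    rw [← hfil, Finset.card_filter]
  rw [hneg, ← Finset.prod_pow_eq_pow_sum]
  rfl

lemma colsum01 (A : Matrix (Fin n) (Fin n) ℤ) (hA : IsASM A) (u : ℕ) (hu : u ≤ n) (j : Fin n) :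
    colsum A u j = 0 ∨ colsum A u j = 1 := by
  rcases u with _ | c
  · left; exact colsum_zero A j
  · have hc : c < n := by omega
    have h := hA.2.2.2.2 j ⟨c, hc⟩
    rw [filter_le_eq] at h
    exact h

lemma CT_card (A : Matrix (Fin n) (Fin n) ℤ) (hA : IsASM A) (u : Fin (n+1)) :
    (CT A u).card = (u:ℕ) := by
  classical
  have hZ : ((CT A u).card : ℤ) = ((u:ℕ) : ℤ) := by
    rw [card_as_sum]
    have h1 : ∀ j : Fin n, (if j ∈ CT A u then (1:ℤ) else 0) = colsum A (u:ℕ) j := by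
      intro j
      by_cases hj : j ∈ CT A u
      · rw [if_pos hj]
        exact ((mem_CT A u j).mp hj).symm
      · rw [if_neg hj]
        rcases colsum01 A hA (u:ℕ) (by have := u.isLt; omega) j with h | h
        · exact h.symm
        · exact absurd ((mem_CT A u j).mpr h) hj
    rw [Finset.sum_congr rfl (fun j _ => h1 j)]
    unfold colsum
    rw [Finset.sum_comm]
    rw [Finset.sum_congr rfl (fun i _ => hA.2.1 i)]
    rw [Finset.sum_const, card_filter_lt (by have := u.isLt; omega : (u:ℕ) ≤ n)]
    simp
  exact_mod_cast hZ

lemma Mmat_CT (A : Matrix (Fin n) (Fin n) ℤ) (hA : IsASM A) : Mmat (CT A) = A := by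
  classical
  funext i j
  show (if j ∈ CT A i.succ then (1:ℤ) else 0) - (if j ∈ CT A i.castSucc then 1 else 0) = A i j
  have hrec := colsum_succ A i.isLt j
  rw [Fin.eta] at hrec
  have hvs : ((i.succ : Fin (n+1)) : ℕ) = (i:ℕ)+1 := Fin.val_succ i
  have hvc : ((i.castSucc : Fin (n+1)) : ℕ) = (i:ℕ) := Fin.coe_castSucc i
  have := i.isLt
  rcases colsum01 A hA (i:ℕ) (by omega) j with h1 | h1 <;>
    rcases colsum01 A hA ((i:ℕ)+1) (by omega) j with h2 | h2 <;>
  · rw [h1, h2] at hrec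
    simp only [mem_CT, hvs, hvc, h1, h2]
    norm_num
    omega
lemma CT_mem (A : Matrix (Fin n) (Fin n) ℤ) (hA : IsASM A) :
    CT A ∈ PCh n (univ : Finset (Fin n)) := by
  classical
  rw [PCh, Finset.mem_filter]
  refine ⟨Finset.mem_univ _, ?_, ?_, ?_⟩
  · ext j
    rw [mem_CT]
    simp only [Fin.val_zero, colsum_zero]
    simp
  · ext j
    rw [mem_CT]
    simp only [Fin.val_last]
    rw [colsum_ge A (le_refl n) j, hA.2.2.1 j]
    simp
  · intro i
    have hvs : ((i.succ : Fin (n+1)) : ℕ) = (i:ℕ)+1 := Fin.val_succ i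
    have hvc : ((i.castSucc : Fin (n+1)) : ℕ) = (i:ℕ) := Fin.coe_castSucc i
    have hin := i.isLt
    constructor
    · rw [CT_card A hA, CT_card A hA, hvs, hvc]
    · intro k
      -- ℤ-level computation of the difference of the two prefix counts
      have hdiff : ((cnt (CT A i.succ) k : ℕ) : ℤ)
          = ((cnt (CT A i.castSucc) k : ℕ) : ℤ)
            + ∑ j ∈ univ.filter (fun j : Fin n => (j:ℕ) < k), A i j := by
        rw [cnt_as_sum, cnt_as_sum, ← Finset.sum_add_distrib]
        apply Finset.sum_congr rfl
        intro j _
        have hrec := colsum_succ A i.isLt j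
        rw [Fin.eta] at hrec
        rcases colsum01 A hA (i:ℕ) (by omega) j with h1 | h1 <;>
          rcases colsum01 A hA ((i:ℕ)+1) (by omega) j with h2 | h2 <;>
        · rw [h1, h2] at hrec
          simp only [mem_CT, hvs, hvc, h1, h2]
          norm_num
          omega
      have hR : (∑ j ∈ univ.filter (fun j : Fin n => (j:ℕ) < k), A i j) = 0
          ∨ (∑ j ∈ univ.filter (fun j : Fin n => (j:ℕ) < k), A i j) = 1 := by
        rcases Nat.eq_zero_or_pos k with hk | hk
        · left
          subst hk
          rw [Finset.filter_false_of_mem (fun j _ => by omega), Finset.sum_empty]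
        · rcases Nat.lt_or_ge (k-1) n with hkn | hkn
          · have hkeq : k = (k-1) + 1 := by omega
            have h := hA.2.2.2.1 i ⟨k-1, hkn⟩
            rw [filter_le_eq] at h
            rw [hkeq]
            exact h
          · right
            rw [Finset.filter_true_of_mem (fun j _ => by have := j.isLt; omega)]
            exact hA.2.1 i
      rcases hR with h | h <;> rw [h] at hdiff <;> omega

end KeyL

theorem two_enumeration_of_ASMs (n : ℕ) (hn : 1 ≤ n) :
    ∃ s : Finset (Matrix (Fin n) (Fin n) ℤ),
      (∀ A, A ∈ s ↔ IsASM A) ∧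
      ∑ A ∈ s, 2 ^ negCount A = 2 ^ (n * (n - 1) / 2) := by
  classical
  refine ⟨(PCh n (univ : Finset (Fin n))).image Mmat, ?_, ?_⟩
  · intro A
    constructor
    · intro hA
      rw [Finset.mem_image] at hA
      obtain ⟨T, hT, rfl⟩ := hA
      exact isASM_Mmat T hT
    · intro hA
      rw [Finset.mem_image]
      exact ⟨CT A, CT_mem A hA, Mmat_CT A hA⟩
  · have hinj : ∀ T1 ∈ PCh n (univ : Finset (Fin n)), ∀ T2 ∈ PCh n (univ : Finset (Fin n)),
        Mmat T1 = Mmat T2 → T1 = T2 := by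
      intro T1 h1 T2 h2 heq
      rw [← CT_Mmat T1 h1, ← CT_Mmat T2 h2, heq]
    have hQ : ((∑ A ∈ (PCh n (univ : Finset (Fin n))).image Mmat, 2 ^ negCount A : ℕ) : ℚ)
        = G n (univ : Finset (Fin n)) := by
      rw [Finset.sum_image hinj]
      push_cast
      rw [← chainSum n univ]
      apply Finset.sum_congr rfl
      intro T _
      exact weight_Mmat T
    rw [G_eq n univ (by simp), final_count] at hQ
    exact_mod_cast hQ
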